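/- Let N ≤ Perm(X) be a regular subgroup and let N' = Cent_{Perm(X)}(N) be its centralizer in Perm(X). Then f : X → E generates Map(X,E) as an E[N]-module if and only if f generates Map(X,E) as an E[N']-module. (Theorem 1.1 in the model M = Map(X,E).) -/

import Mathlib

/-- The action of the group algebra `E[N]` of a subgroup `N ≤ Perm X` on `Map(X, E)`:
`(η • f)(y) = f(η⁻¹ y)`, extended `E`-linearly. -/
noncomputable def permAct {X E : Type*} [Field E] (N : Subgroup (Equiv.Perm X))
    (z : MonoidAlgebra E ↥N) (f : X → E) : X → E :=
  fun y => Finsupp.sum z.coeff fun η c => c * f ((η : Equiv.Perm X)⁻¹ y)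

section Aux

lemma aux_mul_left_surj_iff_isUnit {E A : Type*} [Field E] [Ring A] [Algebra E A]
    [FiniteDimensional E A] (a : A) : (∀ m : A, ∃ z, z * a = m) ↔ IsUnit a := by
  constructor
  · intro h
    obtain ⟨u, hu⟩ := h 1
    have hinj : Function.Injective (LinearMap.mulLeft E a) := by
      intro x y hxy
      simp only [LinearMap.mulLeft_apply] at hxy
      have : u * (a * x) = u * (a * y) := by rw [hxy]
      simpa [← mul_assoc, hu] using this
    obtain ⟨v, hv⟩ := (LinearMap.injective_iff_surjective.mp hinj) 1
    simp only [LinearMap.mulLeft_apply] at hv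
    have huv : u = v := by
      calc u = u * (a * v) := by rw [hv, mul_one]
      _ = u * a * v := by rw [mul_assoc]
      _ = v := by rw [hu, one_mul]
    exact ⟨⟨a, u, by rw [huv]; exact hv, hu⟩, rfl⟩
  · rintro ⟨u, rfl⟩ m
    exact ⟨m * ↑u⁻¹, by rw [mul_assoc, Units.inv_mul, mul_one]⟩

lemma aux_mul_right_surj_iff_isUnit {E A : Type*} [Field E] [Ring A] [Algebra E A]
    [FiniteDimensional E A] (a : A) : (∀ m : A, ∃ z, a * z = m) ↔ IsUnit a := by
  constructor
  · intro h
    obtain ⟨u, hu⟩ := h 1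
    have hinj : Function.Injective (LinearMap.mulRight E a) := by
      intro x y hxy
      simp only [LinearMap.mulRight_apply] at hxy
      have : x * a * u = y * a * u := by rw [hxy]
      simpa [mul_assoc, hu] using this
    obtain ⟨v, hv⟩ := (LinearMap.injective_iff_surjective.mp hinj) 1
    simp only [LinearMap.mulRight_apply] at hv
    have huv : u = v := by
      calc u = v * a * u := by rw [hv, one_mul]
      _ = v * (a * u) := by rw [mul_assoc]
      _ = v := by rw [hu, mul_one]
    exact ⟨⟨a, u, hu, by rw [huv]; exact hv⟩, rfl⟩
  · rintro ⟨u, rfl⟩ m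
    exact ⟨↑u⁻¹ * m, by rw [← mul_assoc, Units.mul_inv, one_mul]⟩

end Aux

section PermActAux

variable {X E : Type*} [Field E] (N : Subgroup (Equiv.Perm X))

lemma permAct_single (η : ↥N) (c : E) (f : X → E) :
    permAct N (MonoidAlgebra.single η c) f = fun y => c * f ((η : Equiv.Perm X)⁻¹ y) := by
  funext y
  simp [permAct, Finsupp.sum_single_index]

lemma permAct_add (z₁ z₂ : MonoidAlgebra E ↥N) (f : X → E) :
    permAct N (z₁ + z₂) f = permAct N z₁ f + permAct N z₂ f := by
  funext y
  simp only [permAct, Pi.add_apply, MonoidAlgebra.coeff_add]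
  exact Finsupp.sum_add_index' (fun _ => zero_mul _) (fun _ b₁ b₂ => add_mul b₁ b₂ _)

end PermActAux

/-- Theorem 1.1 in the model `M = Map(X, E)`: for a regular subgroup `N ≤ Perm X` with
centralizer `N'`, a function `f : X → E` generates `Map(X, E)` as an `E[N]`-module if and
only if it generates `Map(X, E)` as an `E[N']`-module. -/
theorem generator_iff_generator_centralizer
    {X E : Type*} [Fintype X] [Nonempty X] [Field E]
    (N : Subgroup (Equiv.Perm X))
    (htrans : ∀ y z : X, ∃ η ∈ N, η y = z)
    (hcard : Nat.card N = Nat.card X)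
    (f : X → E) :
    (∀ m : X → E, ∃ z : MonoidAlgebra E ↥N, permAct N z f = m) ↔
      (∀ m : X → E, ∃ z' : MonoidAlgebra E ↥(Subgroup.centralizer (N : Set (Equiv.Perm X))),
        permAct (Subgroup.centralizer (N : Set (Equiv.Perm X))) z' f = m) := by
  classical
  obtain ⟨x₀⟩ := (inferInstance : Nonempty X)
  set N' := Subgroup.centralizer (N : Set (Equiv.Perm X)) with hN'
  have hfinN : Finite ↥N := Subtype.finite
  have hfinX : Finite X := inferInstance
  -- the evaluation-at-x₀ map on N is bijective
  have hbij : Function.Bijective (fun η : ↥N => (η : Equiv.Perm X) x₀) := by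
    rw [Nat.bijective_iff_surjective_and_card]
    refine ⟨fun y => ?_, hcard⟩
    obtain ⟨η, hη, h⟩ := htrans x₀ y
    exact ⟨⟨η, hη⟩, h⟩
  let e : ↥N ≃ X := Equiv.ofBijective _ hbij
  have he : ∀ η : ↥N, e η = (η : Equiv.Perm X) x₀ := fun _ => rfl
  have he' : ∀ y : X, ((e.symm y : ↥N) : Equiv.Perm X) x₀ = y := fun y => e.apply_symm_apply y
  have hesymm : ∀ (ν : ↥N) (z : X), e.symm ((ν : Equiv.Perm X) z) = ν * e.symm z := by
    intro ν z
    apply e.injective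
    rw [e.apply_symm_apply, he]
    simp only [Subgroup.coe_mul, Equiv.Perm.coe_mul, Function.comp_apply, he']
  -- centralizer elements commute with elements of N
  have hcomm : ∀ (η' : ↥N') (ν : ↥N) (z : X),
      (η' : Equiv.Perm X) ((ν : Equiv.Perm X) z) = (ν : Equiv.Perm X) ((η' : Equiv.Perm X) z) := by
    intro η' ν z
    have := (Subgroup.mem_centralizer_iff.mp η'.2) (ν : Equiv.Perm X) ν.2
    calc (η' : Equiv.Perm X) ((ν : Equiv.Perm X) z) = ((ν : Equiv.Perm X) * (η' : Equiv.Perm X)) z := by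
          rw [this]; rfl
    _ = (ν : Equiv.Perm X) ((η' : Equiv.Perm X) z) := rfl
  -- evaluation at x₀ is injective on N'
  have hinj' : ∀ η'₁ η'₂ : ↥N', (η'₁ : Equiv.Perm X) x₀ = (η'₂ : Equiv.Perm X) x₀ → η'₁ = η'₂ := by
    intro η'₁ η'₂ h
    refine Subtype.ext (Equiv.ext fun z => ?_)
    have hz : ((e.symm z : ↥N) : Equiv.Perm X) x₀ = z := he' z
    rw [← hz, hcomm η'₁ (e.symm z) x₀, hcomm η'₂ (e.symm z) x₀, h]
  -- evaluation at x₀ is surjective on N'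
  have hsurj' : ∀ y : X, ∃ η' : ↥N', (η' : Equiv.Perm X) x₀ = y := by
    intro y
    set τ : ↥N := e.symm y with hτ
    let κ : Equiv.Perm X := (e.symm.trans (Equiv.mulRight τ)).trans e
    have hκ : ∀ z : X, κ z = ((e.symm z * τ : ↥N) : Equiv.Perm X) x₀ := fun z => rfl
    have hκmem : κ ∈ N' := by
      rw [hN', Subgroup.mem_centralizer_iff]
      intro h hh
      ext z
      have h1 : (h * κ) z = h (κ z) := rfl
      have h2 : (κ * h) z = κ (h z) := rfl
      rw [h1, h2, hκ, hκ, hesymm ⟨h, hh⟩ z]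
      have : (⟨h, hh⟩ * e.symm z * τ : ↥N) = (⟨h, hh⟩ : ↥N) * (e.symm z * τ) := mul_assoc _ _ _
      rw [this]
      simp only [Subgroup.coe_mul, Equiv.Perm.coe_mul, Function.comp_apply]
    refine ⟨⟨κ, hκmem⟩, ?_⟩
    show κ x₀ = y
    rw [hκ x₀]
    have h1 : e.symm x₀ = 1 := by
      apply e.injective
      rw [e.apply_symm_apply, he]
      rfl
    rw [h1, one_mul]
    exact he' y
  -- the set-up for the group algebras
  have : Fintype ↥N := Fintype.ofFinite _
  have : Fintype ↥N' := Fintype.ofFinite _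
  -- the element a of E[N] corresponding to f
  set a : MonoidAlgebra E ↥N := MonoidAlgebra.ofCoeff (Finsupp.equivFunOnFinite.symm (fun σ => f (e σ))) with ha
  have haval : ∀ σ : ↥N, a.coeff σ = f ((σ : Equiv.Perm X) x₀) := fun σ => rfl
  haveI : FiniteDimensional E (MonoidAlgebra E ↥N) :=
    Module.Finite.equiv (MonoidAlgebra.coeffLinearEquiv E : MonoidAlgebra E ↥N ≃ₗ[E] (↥N →₀ E)).symm
  -- Claim A : permAct N z f corresponds to z * a
  have claimA : ∀ (z : MonoidAlgebra E ↥N) (y : X), permAct N z f y = (z * a).coeff (e.symm y) := by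
    intro z
    induction z using MonoidAlgebra.induction with
    | zero => intro y; simp [permAct]
    | single_add η c z hη hc ih =>
      intro y
      rw [permAct_add, add_mul, MonoidAlgebra.coeff_add, Finsupp.add_apply, Pi.add_apply, ih, permAct_single]
      congr 1
      have harg : ((η⁻¹ * e.symm y : ↥N) : Equiv.Perm X) x₀ = ((η : Equiv.Perm X))⁻¹ y := by
        have h2 : ((η⁻¹ * e.symm y : ↥N) : Equiv.Perm X) x₀
            = ((η : Equiv.Perm X))⁻¹ (((e.symm y : ↥N) : Equiv.Perm X) x₀) := rfl
        rw [h2, he' y]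
      rw [MonoidAlgebra.coeff_single_mul_apply, haval, harg]
  -- the bijection p : N' → N
  let q : ↥N' → ↥N := fun η' => e.symm ((η' : Equiv.Perm X)⁻¹ x₀)
  have hq : ∀ η', ((q η' : ↥N) : Equiv.Perm X) x₀ = (η' : Equiv.Perm X)⁻¹ x₀ := fun η' => he' _
  let p : ↥N' → ↥N := fun η' => (q η')⁻¹
  have hpbij : Function.Bijective p := by
    constructor
    · intro η'₁ η'₂ h
      have hqq : q η'₁ = q η'₂ := inv_injective h
      have h2 : (η'₁ : Equiv.Perm X)⁻¹ x₀ = (η'₂ : Equiv.Perm X)⁻¹ x₀ := by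
        rw [← hq, ← hq, hqq]
      have : η'₁⁻¹ = η'₂⁻¹ := hinj' _ _ h2
      exact inv_injective this
    · intro σ
      obtain ⟨η'', hη''⟩ := hsurj' (((σ⁻¹ : ↥N) : Equiv.Perm X) x₀)
      refine ⟨η''⁻¹, ?_⟩
      show (q η''⁻¹)⁻¹ = σ
      have : q η''⁻¹ = σ⁻¹ := by
        apply e.injective
        rw [he, he]
        rw [hq]
        simpa using hη''
      rw [this, inv_inv]
  -- the linear map ℓ : E[N'] → E[N] induced by p
  let ℓ : MonoidAlgebra E ↥N' →ₗ[E] MonoidAlgebra E ↥N := MonoidAlgebra.mapDomainLinearMap E E p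
  have hℓs : ∀ (η' : ↥N') (c : E), ℓ (MonoidAlgebra.single η' c) = MonoidAlgebra.single (p η') c := by
    intro η' c
    exact MonoidAlgebra.mapDomainLinearMap_single p c η'
  -- Claim B : permAct N' z' f corresponds to a * ℓ z'
  have claimB : ∀ (z' : MonoidAlgebra E ↥N') (y : X),
      permAct N' z' f y = (a * ℓ z').coeff (e.symm y) := by
    intro z'
    induction z' using MonoidAlgebra.induction with
    | zero => intro y; simp [permAct]
    | single_add η' c z' hη' hc ih =>
      intro y
      rw [permAct_add, map_add, mul_add, MonoidAlgebra.coeff_add, Finsupp.add_apply, Pi.add_apply, ih,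
        permAct_single, hℓs]
      congr 1
      rw [MonoidAlgebra.coeff_mul_single_apply, haval, mul_comm]
      show c * f (((η' : Equiv.Perm X))⁻¹ y)
          = c * f (((e.symm y * (p η')⁻¹ : ↥N) : Equiv.Perm X) x₀)
      have harg : ((e.symm y * (p η')⁻¹ : ↥N) : Equiv.Perm X) x₀
          = ((η' : Equiv.Perm X))⁻¹ y := by
        have hp : (p η')⁻¹ = q η' := inv_inv _
        rw [hp]
        have h2 : ((e.symm y * q η' : ↥N) : Equiv.Perm X) x₀
            = ((e.symm y : ↥N) : Equiv.Perm X) (((q η' : ↥N) : Equiv.Perm X) x₀) := rfl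
        rw [h2, hq]
        have hcomm' := hcomm η'⁻¹ (e.symm y) x₀
        simp only [Subgroup.coe_inv] at hcomm'
        rw [← hcomm', he' y]
      rw [harg]
  -- transfer the two surjectivity statements through Claim A and Claim B
  have lhs_iff : (∀ m : X → E, ∃ z : MonoidAlgebra E ↥N, permAct N z f = m) ↔
      (∀ m' : MonoidAlgebra E ↥N, ∃ z, z * a = m') := by
    constructor
    · intro h m'
      obtain ⟨z, hz⟩ := h (fun y => m'.coeff (e.symm y))
      refine ⟨z, MonoidAlgebra.ext (Finsupp.ext fun σ => ?_)⟩
      have := claimA z (e σ)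
      rw [hz] at this
      simpa using this.symm
    · intro h m
      obtain ⟨z, hz⟩ := h (MonoidAlgebra.ofCoeff (Finsupp.equivFunOnFinite.symm (fun σ => m (e σ))))
      refine ⟨z, funext fun y => ?_⟩
      rw [claimA z y, hz]
      show m (e (e.symm y)) = m y
      rw [e.apply_symm_apply]
  have rhs_iff : (∀ m : X → E, ∃ z' : MonoidAlgebra E ↥N', permAct N' z' f = m) ↔
      (∀ m' : MonoidAlgebra E ↥N, ∃ z, a * z = m') := by
    constructor
    · intro h m'
      obtain ⟨z', hz'⟩ := h (fun y => m'.coeff (e.symm y))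
      refine ⟨ℓ z', MonoidAlgebra.ext (Finsupp.ext fun σ => ?_)⟩
      have := claimB z' (e σ)
      rw [hz'] at this
      simpa using this.symm
    · intro h m
      obtain ⟨w, hw⟩ := h (MonoidAlgebra.ofCoeff (Finsupp.equivFunOnFinite.symm (fun σ => m (e σ))))
      -- pull w back through the bijection mapDomain p
      let pe : ↥N' ≃ ↥N := Equiv.ofBijective p hpbij
      have hmd : ℓ (MonoidAlgebra.ofCoeff (Finsupp.equivMapDomain pe.symm w.coeff)) = w := by
        show MonoidAlgebra.ofCoeff (Finsupp.mapDomain p (Finsupp.equivMapDomain pe.symm w.coeff)) = w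
        have hpe : p = ⇑pe := rfl
        rw [hpe, ← Finsupp.equivMapDomain_eq_mapDomain, ← Finsupp.equivMapDomain_trans,
          Equiv.symm_trans_self, Finsupp.equivMapDomain_refl, MonoidAlgebra.ofCoeff_coeff]
      refine ⟨MonoidAlgebra.ofCoeff (Finsupp.equivMapDomain pe.symm w.coeff), funext fun y => ?_⟩
      rw [claimB _ y, hmd, hw]
      show m (e (e.symm y)) = m y
      rw [e.apply_symm_apply]
  rw [lhs_iff, rhs_iff, aux_mul_left_surj_iff_isUnit (E := E) a, aux_mul_right_surj_iff_isUnit (E := E) a]
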